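/- Let λ be a real eigenvalue of B = Aᵀ with a real eigenvector ν⁰ and a real generalized eigenvector ν¹ of first order, i.e. (B − λI)ν¹ = ν⁰. Then F(x) = (ν⁰·x) · exp(−λ · (ν¹·x)/(ν⁰·x)) is an autonomous first integral of dx/dt = Ax on any open set where ν⁰·x ≠ 0. -/

import Mathlib

open Matrix

noncomputable def dotCLM {n : ℕ} (v : Fin n → ℝ) : (Fin n → ℝ) →L[ℝ] ℝ :=
  LinearMap.toContinuousLinearMap
    { toFun := fun y => v ⬝ᵥ y
      map_add' := fun a b => by simp [dotProduct_add]
      map_smul' := fun c a => by simp [dotProduct_smul] }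

lemma dotCLM_apply {n : ℕ} (v y : Fin n → ℝ) : dotCLM v y = v ⬝ᵥ y := rfl

lemma hasFDerivAt_dot {n : ℕ} (v x : Fin n → ℝ) :
    HasFDerivAt (fun y : Fin n → ℝ => v ⬝ᵥ y) (dotCLM v) x :=
  (dotCLM v).hasFDerivAt

/-- Theorem 1.5: if `λ` is a real eigenvalue of `B = Aᵀ` with eigenvector `ν⁰` and
first-order generalized eigenvector `ν¹` (`(B − λI)ν¹ = ν⁰`), then
`F(x) = (ν⁰·x)·exp(−λ·(ν¹·x)/(ν⁰·x))` is an autonomous first integral of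
`dx/dt = Ax` wherever `ν⁰·x ≠ 0`. -/
theorem first_integral_generalized_eigenvector
    (n : ℕ) (A : Matrix (Fin n) (Fin n) ℝ)
    (ν₀ ν₁ : Fin n → ℝ) (lam : ℝ) (hν₀ : ν₀ ≠ 0)
    (heig : Aᵀ.mulVec ν₀ = lam • ν₀)
    (hgen : Aᵀ.mulVec ν₁ - lam • ν₁ = ν₀) :
    ∀ x : Fin n → ℝ, ν₀ ⬝ᵥ x ≠ 0 →
      fderiv ℝ (fun y => (ν₀ ⬝ᵥ y) * Real.exp (-lam * ((ν₁ ⬝ᵥ y) / (ν₀ ⬝ᵥ y))))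
        x (A.mulVec x) = 0 := by
  intro x hx
  have h0 := hasFDerivAt_dot ν₀ x
  have h1 := hasFDerivAt_dot ν₁ x
  have hinv : HasFDerivAt (fun y : Fin n → ℝ => (ν₀ ⬝ᵥ y)⁻¹)
      ((-((ν₀ ⬝ᵥ x) ^ 2)⁻¹) • dotCLM ν₀) x :=
    (hasDerivAt_inv hx).comp_hasFDerivAt x h0
  have hdiv : HasFDerivAt (fun y : Fin n → ℝ => (ν₁ ⬝ᵥ y) / (ν₀ ⬝ᵥ y))
      ((ν₁ ⬝ᵥ x) • ((-((ν₀ ⬝ᵥ x) ^ 2)⁻¹) • dotCLM ν₀) + (ν₀ ⬝ᵥ x)⁻¹ • dotCLM ν₁) x := by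
    have h2 : HasFDerivAt (fun y : Fin n → ℝ => (ν₁ ⬝ᵥ y) * (ν₀ ⬝ᵥ y)⁻¹) _ x := h1.mul hinv
    simpa [div_eq_mul_inv] using h2
  have hexp := (hdiv.const_mul (-lam)).exp
  have hF : HasFDerivAt (fun y => (ν₀ ⬝ᵥ y) * Real.exp (-lam * ((ν₁ ⬝ᵥ y) / (ν₀ ⬝ᵥ y)))) _ x := h0.mul hexp
  rw [hF.fderiv]
  have key0 : ν₀ ⬝ᵥ (A.mulVec x) = lam * (ν₀ ⬝ᵥ x) := by
    rw [dotProduct_mulVec, ← mulVec_transpose, heig]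
    simp [smul_dotProduct]
  have key1 : ν₁ ⬝ᵥ (A.mulVec x) = lam * (ν₁ ⬝ᵥ x) + (ν₀ ⬝ᵥ x) := by
    have : Aᵀ.mulVec ν₁ = lam • ν₁ + ν₀ := by
      rw [← hgen]; abel
    rw [dotProduct_mulVec, ← mulVec_transpose, this]
    simp [add_dotProduct, smul_dotProduct]
  simp only [ContinuousLinearMap.add_apply, ContinuousLinearMap.smul_apply,
    ContinuousLinearMap.sub_apply, smul_eq_mul, dotCLM_apply, key0, key1]
  field_simp
  ring
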